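/- In the CHSH game where Alice's response to question A = 0 is fixed to X = 0, the maximum winning probability of any non-signaling strategy is 3/4, equal to the classical value. That is, for any non-signaling conditional distribution p(x,y|a,b) on bits with Σ_y p(0,y|0,b) = 1 for all b, the average over uniform a,b of Σ_{x,y : x XOR y = a·b} p(x,y|a,b) is at most 3/4. -/
import Mathlib


/-- In the CHSH game where Alice's response to question `A = 0` is fixed to
`X = 0`, any non-signaling strategy wins with probability at most 3/4,
the classical value. -/
theorem chsh_nonsignaling_fixed_response
    (p : Bool → Bool → Bool → Bool → ℝ)
    (hnn : ∀ a b x y, 0 ≤ p a b x y)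
    (hsum : ∀ a b, ∑ x : Bool, ∑ y : Bool, p a b x y = 1)
    (hnsA : ∀ a b b' x, ∑ y : Bool, p a b x y = ∑ y : Bool, p a b' x y)
    (hnsB : ∀ a a' b y, ∑ x : Bool, p a b x y = ∑ x : Bool, p a' b x y)
    (hfix : ∀ b, ∑ y : Bool, p false b false y = 1) :
    (1/4 : ℝ) * ∑ a : Bool, ∑ b : Bool, ∑ x : Bool, ∑ y : Bool,
      (if xor x y = (a && b) then p a b x y else 0) ≤ 3/4 := by
  have h1 := hsum false false
  have h2 := hsum false true
  have h3 := hsum true false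
  have h4 := hsum true true
  have a1 := hnsA false false true false
  have a2 := hnsA false false true true
  have a3 := hnsA true false true false
  have a4 := hnsA true false true true
  have b1 := hnsB false true false false
  have b2 := hnsB false true false true
  have b3 := hnsB false true true false
  have b4 := hnsB false true true true
  have f1 := hfix false
  have f2 := hfix true
  have n1 := hnn false false true false
  have n2 := hnn false false true true
  have n3 := hnn false true true false
  have n4 := hnn false true true true
  have n5 := hnn true true false false
  have n6 := hnn true true true true
  have n7 := hnn true false false true
  have n8 := hnn true false true false
  simp only [Fintype.sum_bool] at *
  norm_num at *
  linarith
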